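/- Let D = A + C = !![0,2;0,0] and let H = x·A + y·B + z·C. Then there exists M ∈ SL(2,ℝ) with M·D·M⁻¹ = H if and only if x² + y² − z² = 0 and z > 0. (The adjoint orbit of D is the upper half of the cone x² + y² − z² = 0 with the origin removed.) -/

import Mathlib

noncomputable def A : Matrix (Fin 2) (Fin 2) ℝ := !![0, 1; 1, 0]
noncomputable def B : Matrix (Fin 2) (Fin 2) ℝ := !![1, 0; 0, -1]
noncomputable def C : Matrix (Fin 2) (Fin 2) ℝ := !![0, 1; -1, 0]
noncomputable def D : Matrix (Fin 2) (Fin 2) ℝ := A + C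

lemma inv_fin_two (a b c d : ℝ) (h : a * d - b * c = 1) :
    (!![a, b; c, d] : Matrix (Fin 2) (Fin 2) ℝ)⁻¹ = !![d, -b; -c, a] := by
  rw [Matrix.inv_def, Matrix.adjugate_fin_two, Matrix.det_fin_two]
  simp [h]

lemma conj_D (a b c d : ℝ) (h : a * d - b * c = 1) :
    !![a, b; c, d] * D * (!![a, b; c, d] : Matrix (Fin 2) (Fin 2) ℝ)⁻¹ =
      !![-(2*a*c), 2*a^2; -(2*c^2), 2*a*c] := by
  rw [inv_fin_two a b c d h]
  have hD : D = !![0, 2; 0, 0] := by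
    ext i j
    fin_cases i <;> fin_cases j <;> simp [D, A, C] <;> norm_num
  rw [hD]
  ext i j
  fin_cases i <;> fin_cases j <;>
    simp [Matrix.mul_apply, Fin.sum_univ_two] <;> ring_nf <;> tauto

lemma combo (x y z : ℝ) :
    x • A + y • B + z • C = !![y, x + z; x - z, -y] := by
  ext i j
  fin_cases i <;> fin_cases j <;> simp [A, B, C] <;> ring

/-- The adjoint orbit of `D = A + C = !![0,2;0,0]` under `SL(2,ℝ)` is the upper half
of the cone `x² + y² − z² = 0` (with the origin removed). -/
theorem adjoint_orbit_D_eq_upper_cone (x y z : ℝ) :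
    (∃ M : Matrix (Fin 2) (Fin 2) ℝ, M.det = 1 ∧
        M * D * M⁻¹ = x • A + y • B + z • C) ↔
      x ^ 2 + y ^ 2 - z ^ 2 = 0 ∧ 0 < z := by
  constructor
  · rintro ⟨M, hdet, hM⟩
    set a := M 0 0 with ha
    set b := M 0 1 with hb
    set c := M 1 0 with hc
    set d := M 1 1 with hd
    have hM2 : M = !![a, b; c, d] := by
      rw [ha, hb, hc, hd]; exact Matrix.etaExpand_eq M |>.symm
    rw [Matrix.det_fin_two] at hdet
    rw [hM2, conj_D a b c d hdet, combo] at hM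
    have e00 : -(2*a*c) = y := congrFun (congrFun hM 0) 0
    have e01 : 2*a^2 = x + z := congrFun (congrFun hM 0) 1
    have e10 : -(2*c^2) = x - z := congrFun (congrFun hM 1) 0
    constructor
    · have hx' : x = a^2 - c^2 := by linarith
      have hz' : z = a^2 + c^2 := by linarith
      have hy' : y = -(2*a*c) := by linarith
      rw [hx', hz', hy']; ring
    · nlinarith [e00, e01, e10, sq_nonneg (a*b + c*d), sq_nonneg b, sq_nonneg d,
        sq_nonneg a, sq_nonneg c, hdet]
  · rintro ⟨hcone, hz⟩
    by_cases hs : z + x = 0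
    -- case x = -z : take M = !![0, -1/√z; √z, 0]
    · have hy : y = 0 := by nlinarith
      have hzpos : (0:ℝ) < Real.sqrt z := Real.sqrt_pos.mpr hz
      refine ⟨!![0, -(Real.sqrt z)⁻¹; Real.sqrt z, 0], ?_, ?_⟩
      · rw [Matrix.det_fin_two_of]
        field_simp
        norm_num
      · have hdet' : (0:ℝ) * 0 - (-(Real.sqrt z)⁻¹) * Real.sqrt z = 1 := by
          field_simp
          norm_num
        rw [conj_D _ _ _ _ hdet', combo]
        have hsq : Real.sqrt z ^ 2 = z := Real.sq_sqrt hz.le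
        ext i j
        fin_cases i <;> fin_cases j <;> simp [hy] <;> nlinarith [hsq, hs]
    · have hs' : 0 < z + x := by
        rcases lt_or_gt_of_ne hs with h | h
        · exfalso; nlinarith
        · exact h
      set a : ℝ := Real.sqrt ((z + x) / 2) with ha
      have hapos : 0 < a := Real.sqrt_pos.mpr (by linarith)
      have ha2 : 2 * a ^ 2 = z + x := by
        rw [ha, Real.sq_sqrt (by linarith : (0:ℝ) ≤ (z + x)/2)]; ring
      set c : ℝ := -y / (2 * a) with hc
      have hc2 : 2 * c ^ 2 = z - x := by
        rw [hc]
        have : (-y / (2*a))^2 = y^2 / (4 * a^2) := by ring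
        rw [this]
        have h4a : 4 * a ^ 2 = 2 * (z + x) := by linarith
        rw [h4a]
        have hy2 : y ^ 2 = z ^ 2 - x ^ 2 := by nlinarith
        rw [hy2]
        field_simp
        ring
      have hac : -(2 * a * c) = y := by
        rw [hc]; field_simp
      have hsum : 0 < a ^ 2 + c ^ 2 := by positivity
      refine ⟨!![a, -c / (a^2 + c^2); c, a / (a^2 + c^2)], ?_, ?_⟩
      · rw [Matrix.det_fin_two_of]
        field_simp
        ring
      · have hdet' : a * (a / (a^2 + c^2)) - (-c / (a^2 + c^2)) * c = 1 := by
          field_simp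
          ring
        rw [conj_D _ _ _ _ hdet', combo]
        ext i j
        fin_cases i <;> fin_cases j <;> simp <;> linarith [ha2, hc2, hac]
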